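/- arXiv:1506.07691 — 9 statements merged into one kernel-verified Lean document; each statement's English description precedes it below -/
import Mathlib

section
/- Let X, Y, Z be Banach spaces, T ∈ B(X,Y), U ∈ B(X,Z). If T majorizes U (i.e., there exists γ > 0 with ‖Uf‖ ≤ γ‖Tf‖ for all f ∈ X) and the closure of the range of T is complemented in Y, then there exists a bounded operator Q ∈ B(Y,Z) such that U = QT. -/
/-- If `T` majorizes `U` and the closure of the range of `T` is complemented,
then `U` factors through `T`. -/
theorem majorize_factorization {X Y Z : Type*}
    [NormedAddCommGroup X] [NormedSpace ℂ X] [CompleteSpace X]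
    [NormedAddCommGroup Y] [NormedSpace ℂ Y] [CompleteSpace Y]
    [NormedAddCommGroup Z] [NormedSpace ℂ Z] [CompleteSpace Z]
    (T : X →L[ℂ] Y) (U : X →L[ℂ] Z) (γ : ℝ) (hγ : 0 < γ)
    (hmaj : ∀ f : X, ‖U f‖ ≤ γ * ‖T f‖)
    (hcompl : Submodule.ClosedComplemented
      ((LinearMap.range (T : X →ₗ[ℂ] Y)).topologicalClosure)) :
    ∃ Q : Y →L[ℂ] Z, U = Q.comp T := by
  classical
  obtain ⟨P, hP⟩ := hcompl
  -- If T a = T b then U a = U b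
  have key : ∀ a b : X, T a = T b → U a = U b := by
    intro a b hab
    have h1 : T (a - b) = 0 := by simp [map_sub, hab]
    have h2 : ‖U (a - b)‖ ≤ γ * ‖T (a - b)‖ := hmaj _
    rw [h1] at h2
    simp only [norm_zero, mul_zero] at h2
    have h3 : U (a - b) = 0 := norm_le_zero_iff.mp h2
    have := sub_eq_zero.mp (by simpa [map_sub] using h3)
    exact this
  -- choose preimages
  have sec : ∀ y : LinearMap.range (T : X →ₗ[ℂ] Y), T (y.2.choose) = y := fun y => y.2.choose_spec
  -- the linear map on range T
  let g : (LinearMap.range (T : X →ₗ[ℂ] Y)) →ₗ[ℂ] Z :=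
    { toFun := fun y => U (y.2.choose)
      map_add' := by
        intro y y'
        have h : T ((y + y').2.choose) = T (y.2.choose + y'.2.choose) := by
          rw [map_add, sec, sec, sec]; rfl
        show U ((y + y').2.choose) = U y.2.choose + U y'.2.choose
        rw [key _ _ h, map_add]
      map_smul' := by
        intro c y
        simp only [RingHom.id_apply]
        have h : T ((c • y).2.choose) = T (c • y.2.choose) := by
          rw [map_smul, sec, sec]; rfl
        show U ((c • y).2.choose) = c • U y.2.choose
        rw [key _ _ h, map_smul] }
  have hg_bound : ∀ y : LinearMap.range (T : X →ₗ[ℂ] Y), ‖g y‖ ≤ γ * ‖y‖ := by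
    intro y
    have := hmaj (y.2.choose)
    rw [sec y] at this
    exact this
  let S : (LinearMap.range (T : X →ₗ[ℂ] Y)) →L[ℂ] Z := g.mkContinuous γ hg_bound
  -- inclusion into the closure
  let C := (LinearMap.range (T : X →ₗ[ℂ] Y)).topologicalClosure
  let e : (LinearMap.range (T : X →ₗ[ℂ] Y)) →L[ℂ] C :=
    LinearMap.mkContinuous
      (Submodule.inclusion (Submodule.le_topologicalClosure _)) 1
      (by intro x; simp [Submodule.inclusion])
  have h_e : IsUniformInducing e := by
    have : Isometry e := fun a b => rfl
    exact this.isUniformInducing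
  have h_dense : DenseRange e := by
    intro y
    rw [closure_subtype]
    have : (Subtype.val '' Set.range e) = ((LinearMap.range (T : X →ₗ[ℂ] Y) : Set Y)) := by
      ext v
      constructor
      · rintro ⟨w, ⟨u, rfl⟩, rfl⟩
        exact u.2
      · rintro hv
        exact ⟨e ⟨v, hv⟩, ⟨⟨v, hv⟩, rfl⟩, rfl⟩
    rw [this]
    have := y.2
    rwa [← Submodule.topologicalClosure_coe]
  let S' : C →L[ℂ] Z := S.extend e
  refine ⟨S'.comp P, ?_⟩
  ext f
  have hmem : T f ∈ LinearMap.range (T : X →ₗ[ℂ] Y) := ⟨f, rfl⟩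
  have hPT : P (T f) = (⟨T f, Submodule.le_topologicalClosure _ hmem⟩ : C) := by
    have := hP ⟨T f, Submodule.le_topologicalClosure _ hmem⟩
    simpa using this
  have he : e ⟨T f, hmem⟩ = (⟨T f, Submodule.le_topologicalClosure _ hmem⟩ : C) := rfl
  have hext : S' (e ⟨T f, hmem⟩) = S ⟨T f, hmem⟩ :=
    ContinuousLinearMap.extend_eq (f := S) (e := e) h_dense h_e _
  have hSval : S ⟨T f, hmem⟩ = U f := key _ _ (sec ⟨T f, hmem⟩)
  simp only [ContinuousLinearMap.comp_apply]
  rw [hPT, ← he, hext, hSval]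
end

section
/- Let X, Y, Z be Banach spaces, T ∈ B(X,Y) and U ∈ B(X,Z). If T majorizes U, then the range of the adjoint U* is contained in the range of the adjoint T*. -/
open scoped ComplexConjugate
open Filter Topology

/-- A compatible semi-inner product on a complex normed space. -/
structure CompatSIP (X : Type*) [NormedAddCommGroup X] [NormedSpace ℂ X] where
  sip : X → X → ℂ
  add_left : ∀ f g h : X, sip (f + g) h = sip f h + sip g h
  smul_left : ∀ (a : ℂ) (f g : X), sip (a • f) g = a * sip f g
  smul_right : ∀ (a : ℂ) (f g : X), sip f (a • g) = conj a * sip f g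
  compat : ∀ f : X, sip f f = (‖f‖ : ℂ) ^ 2
  cauchy_schwarz : ∀ f g : X, ‖sip f g‖ ≤ ‖f‖ * ‖g‖

/-- The dual element `f*` of `f`, i.e. the bounded functional `g ↦ [g, f]`. -/
noncomputable def CompatSIP.dual {X : Type*} [NormedAddCommGroup X] [NormedSpace ℂ X]
    (S : CompatSIP X) (f : X) : StrongDual ℂ X :=
  LinearMap.mkContinuous
    { toFun := fun g => S.sip g f
      map_add' := fun g h => S.add_left g h f
      map_smul' := fun a g => S.smul_left a g f }
    ‖f‖ (fun g => by
      calc ‖S.sip g f‖ ≤ ‖g‖ * ‖f‖ := S.cauchy_schwarz g f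
        _ = ‖f‖ * ‖g‖ := mul_comm _ _)

/-- The Banach-space adjoint `T* : Y* → X*` of a bounded operator `T : X → Y`. -/
noncomputable def opDual {X Y : Type*} [NormedAddCommGroup X] [NormedSpace ℂ X]
    [NormedAddCommGroup Y] [NormedSpace ℂ Y] (T : X →L[ℂ] Y) :
    StrongDual ℂ Y →L[ℂ] StrongDual ℂ X :=
  LinearMap.mkContinuous
    { toFun := fun φ => φ.comp T
      map_add' := fun φ ψ => ContinuousLinearMap.add_comp φ ψ T
      map_smul' := fun a φ => ContinuousLinearMap.smul_comp a φ T }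
    ‖T‖ (fun φ => by
      calc ‖φ.comp T‖ ≤ ‖φ‖ * ‖T‖ := ContinuousLinearMap.opNorm_comp_le φ T
        _ = ‖T‖ * ‖φ‖ := mul_comm _ _)

@[simp] lemma opDual_apply {X Y : Type*} [NormedAddCommGroup X] [NormedSpace ℂ X]
    [NormedAddCommGroup Y] [NormedSpace ℂ Y] (T : X →L[ℂ] Y)
    (φ : StrongDual ℂ Y) (x : X) : opDual T φ x = φ (T x) := rfl

/-- Convergence of the series `∑ v j` (in the Schauder/ordered sense) to `s`. -/
def SumsTo {X : Type*} [NormedAddCommGroup X] (v : ℕ → X) (s : X) : Prop :=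
  Tendsto (fun n => ∑ j ∈ Finset.range n, v j) atTop (𝓝 s)

/-- If `T` majorizes `U` then `R(U*) ⊆ R(T*)`. -/
theorem majorize_adjoint_range {X Y Z : Type*}
    [NormedAddCommGroup X] [NormedSpace ℂ X] [CompleteSpace X]
    [NormedAddCommGroup Y] [NormedSpace ℂ Y] [CompleteSpace Y]
    [NormedAddCommGroup Z] [NormedSpace ℂ Z] [CompleteSpace Z]
    (T : X →L[ℂ] Y) (U : X →L[ℂ] Z) (γ : ℝ) (hγ : 0 < γ)
    (hmaj : ∀ f : X, ‖U f‖ ≤ γ * ‖T f‖) :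
    Set.range (opDual U) ⊆ Set.range (opDual T) := by
  rintro ξ ⟨φ, rfl⟩
  set f : X →ₗ[ℂ] Y := (T : X →ₗ[ℂ] Y)
  have hUzero : ∀ x : X, T x = 0 → φ (U x) = 0 := by
    intro x hx
    have h1 : ‖U x‖ ≤ γ * ‖T x‖ := hmaj x
    rw [hx, norm_zero, mul_zero] at h1
    have : U x = 0 := norm_le_zero_iff.mp h1
    rw [this, map_zero]
  have hle : LinearMap.ker f ≤ LinearMap.ker ((φ.comp U : X →L[ℂ] ℂ) : X →ₗ[ℂ] ℂ) := by
    intro x hx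
    simp only [LinearMap.mem_ker] at hx ⊢
    exact hUzero x hx
  set ℓ : LinearMap.range f →ₗ[ℂ] ℂ :=
    ((LinearMap.ker f).liftQ ((φ.comp U : X →L[ℂ] ℂ) : X →ₗ[ℂ] ℂ) hle) ∘ₗ
      (f.quotKerEquivRange).symm.toLinearMap with hℓ
  have key : ∀ x : X, ℓ ⟨f x, LinearMap.mem_range_self f x⟩ = φ (U x) := by
    intro x
    have h1 : f.quotKerEquivRange (Submodule.Quotient.mk x)
        = ⟨f x, LinearMap.mem_range_self f x⟩ := Subtype.ext (f.quotKerEquivRange_apply_mk x)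
    have h2 : (f.quotKerEquivRange).symm ⟨f x, LinearMap.mem_range_self f x⟩
        = Submodule.Quotient.mk x := by
      rw [LinearEquiv.symm_apply_eq, h1]
    simp only [hℓ, LinearMap.comp_apply, LinearEquiv.coe_coe, h2]
    rfl
  have bound : ∀ y : LinearMap.range f, ‖ℓ y‖ ≤ (γ * ‖φ‖) * ‖y‖ := by
    rintro ⟨y, hy⟩
    obtain ⟨x, rfl⟩ := hy
    rw [key x]
    calc ‖φ (U x)‖ ≤ ‖φ‖ * ‖U x‖ := φ.le_opNorm (U x)
      _ ≤ ‖φ‖ * (γ * ‖T x‖) := by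
          exact mul_le_mul_of_nonneg_left (hmaj x) (norm_nonneg φ)
      _ = (γ * ‖φ‖) * ‖T x‖ := by ring
      _ = (γ * ‖φ‖) * ‖(⟨f x, LinearMap.mem_range_self f x⟩ : LinearMap.range f)‖ := rfl
  set ℓc : LinearMap.range f →L[ℂ] ℂ := LinearMap.mkContinuous ℓ (γ * ‖φ‖) bound with hℓc
  obtain ⟨ψ, hψ, -⟩ := exists_extension_norm_eq (LinearMap.range f) ℓc
  refine ⟨ψ, ?_⟩
  ext x
  have : ψ (T x) = ℓc ⟨f x, LinearMap.mem_range_self f x⟩ :=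
    hψ ⟨f x, LinearMap.mem_range_self f x⟩
  simp only [opDual_apply]
  rw [this]
  exact key x
end

section
/- Let X, Y, Z be Banach spaces, T ∈ B(X,Y), V ∈ B(Z,Y). If R(V) ⊆ R(T), then T* majorizes V*, i.e., there exists γ > 0 with ‖V*g*‖ ≤ γ‖T*g*‖ for all g* ∈ Y*. -/
open scoped ComplexConjugate
open Filter Topology

/-- If `R(V) ⊆ R(T)` then `T*` majorizes `V*`. -/
theorem range_subset_adjoint_majorize {X Y Z : Type*}
    [NormedAddCommGroup X] [NormedSpace ℂ X] [CompleteSpace X]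
    [NormedAddCommGroup Y] [NormedSpace ℂ Y] [CompleteSpace Y]
    [NormedAddCommGroup Z] [NormedSpace ℂ Z] [CompleteSpace Z]
    (T : X →L[ℂ] Y) (V : Z →L[ℂ] Y)
    (hrange : Set.range V ⊆ Set.range T) :
    ∃ γ : ℝ, 0 < γ ∧ ∀ φ : StrongDual ℂ Y,
      ‖opDual V φ‖ ≤ γ * ‖opDual T φ‖ := by
  
  classical
  -- kernel of T is closed
  haveI hK : IsClosed ((LinearMap.ker (T : X →ₗ[ℂ] Y) : Submodule ℂ X) : Set X) := ContinuousLinearMap.isClosed_ker T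
  set K : Submodule ℂ X := LinearMap.ker (T : X →ₗ[ℂ] Y) with hKdef
  -- the induced injective map on the quotient
  let Tbar : (X ⧸ K) →ₗ[ℂ] Y := K.liftQ (T : X →ₗ[ℂ] Y) (le_refl _)
  have hTbar_mk : ∀ x : X, Tbar (Submodule.Quotient.mk x) = T x := fun x => rfl
  have hTbar_inj : Function.Injective Tbar := by
    have hker : LinearMap.ker Tbar = ⊥ :=
      Submodule.ker_liftQ_eq_bot K (T : X →ₗ[ℂ] Y) (le_refl _) (le_refl _)
    exact LinearMap.ker_eq_bot.mp hker
  have hTbar_cont : Continuous Tbar := by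
    apply AddMonoidHomClass.continuous_of_bound Tbar (‖T‖ + 1)
    intro q
    refine le_of_forall_pos_le_add (fun ε hε => ?_) 
    have hpos : (0:ℝ) < ε / (‖T‖ + 1) := by positivity
    obtain ⟨m, hm, hmlt⟩ := Submodule.Quotient.norm_mk_lt q hpos
    have : Tbar q = T m := by rw [← hm]; rfl
    rw [this]
    calc ‖T m‖ ≤ ‖T‖ * ‖m‖ := T.le_opNorm m
      _ ≤ (‖T‖ + 1) * ‖m‖ := by
          have := norm_nonneg m; nlinarith [norm_nonneg (T : X →L[ℂ] Y)]
      _ ≤ (‖T‖ + 1) * (‖q‖ + ε / (‖T‖ + 1)) := by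
          have h1 : (0:ℝ) < ‖T‖ + 1 := by positivity
          exact mul_le_mul_of_nonneg_left hmlt.le h1.le
      _ = (‖T‖ + 1) * ‖q‖ + ε := by
          have h1 : (‖T‖ + 1) ≠ 0 := by positivity
          field_simp
  -- the factorization map g : Z → X ⧸ K
  have hVz : ∀ z : Z, ∃ x : X, T x = V z := fun z => hrange ⟨z, rfl⟩
  choose f hf using hVz
  let g0 : Z → (X ⧸ K) := fun z => Submodule.Quotient.mk (f z)
  have hTg : ∀ z, Tbar (g0 z) = V z := fun z => hf z
  have hadd : ∀ z w : Z, g0 (z + w) = g0 z + g0 w := by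
    intro z w
    apply hTbar_inj
    rw [map_add, hTg, hTg, hTg, map_add]
  have hsmul : ∀ (a : ℂ) (z : Z), g0 (a • z) = a • g0 z := by
    intro a z
    apply hTbar_inj
    rw [map_smul, hTg, hTg, map_smul]
  let g : Z →ₗ[ℂ] (X ⧸ K) :=
    { toFun := g0, map_add' := hadd, map_smul' := hsmul }
  -- closed graph theorem
  have hg_cont : Continuous g := by
    apply LinearMap.continuous_of_seq_closed_graph
    intro u z q hu hgu
    apply hTbar_inj
    have h1 : Tendsto (fun n => Tbar (g (u n))) atTop (𝓝 (Tbar q)) :=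
      (hTbar_cont.tendsto q).comp hgu
    have h2 : (fun n => Tbar (g (u n))) = fun n => V (u n) := by
      funext n; exact hTg (u n)
    rw [h2] at h1
    have h3 : Tendsto (fun n => V (u n)) atTop (𝓝 (V z)) :=
      (V.continuous.tendsto z).comp hu
    have h4 := tendsto_nhds_unique h1 h3
    exact h4.trans (hTg z).symm
  obtain ⟨C, hC_pos, hC⟩ : ∃ C : ℝ, 0 < C ∧ ∀ z : Z, ‖g z‖ ≤ C * ‖z‖ := by
    let G : Z →L[ℂ] (X ⧸ K) := ⟨g, hg_cont⟩
    refine ⟨‖G‖ + 1, by positivity, fun z => ?_⟩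
    have h5 := G.le_opNorm z
    have he : ‖G z‖ = ‖g z‖ := rfl
    have hz := norm_nonneg z
    nlinarith
  -- conclude
  refine ⟨C, hC_pos, fun φ => ?_⟩
  apply ContinuousLinearMap.opNorm_le_bound _ (by positivity)
  intro z
  -- |φ (V z)| ≤ ‖T*φ‖ * ‖g z‖
  have key : ‖opDual V φ z‖ ≤ ‖opDual T φ‖ * ‖g z‖ := by
    refine le_of_forall_pos_le_add (fun ε hε => ?_)
    have hpos : (0:ℝ) < ε / (‖opDual T φ‖ + 1) := by positivity
    obtain ⟨m, hm, hmlt⟩ := Submodule.Quotient.norm_mk_lt (g z) hpos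
    have hTm : T m = V z := by
      have : Tbar (Submodule.Quotient.mk m) = Tbar (g z) := by rw [hm]
      rw [hTbar_mk] at this; exact this.trans (hTg z)
    have : opDual V φ z = opDual T φ m := by
      simp only [opDual_apply, hTm]
    rw [this]
    calc ‖opDual T φ m‖ ≤ ‖opDual T φ‖ * ‖m‖ := (opDual T φ).le_opNorm m
      _ ≤ (‖opDual T φ‖) * (‖g z‖ + ε / (‖opDual T φ‖ + 1)) := by
          apply mul_le_mul_of_nonneg_left hmlt.le (norm_nonneg _)
      _ ≤ ‖opDual T φ‖ * ‖g z‖ + ε := by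
          have h1 : (0:ℝ) < ‖opDual T φ‖ + 1 := by positivity
          have h2 : ‖opDual T φ‖ * (ε / (‖opDual T φ‖ + 1)) ≤ ε := by
            rw [mul_div_assoc'] ; rw [div_le_iff₀ h1]; nlinarith [norm_nonneg (opDual T φ), hε.le]
          nlinarith [norm_nonneg (opDual T φ)]
  calc ‖opDual V φ z‖ ≤ ‖opDual T φ‖ * ‖g z‖ := key
    _ ≤ ‖opDual T φ‖ * (C * ‖z‖) := by
        exact mul_le_mul_of_nonneg_left (hC z) (norm_nonneg _)
    _ = C * ‖opDual T φ‖ * ‖z‖ := by ring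
end

section
/- Every family of local X_d*-atoms {f_j} for X_0* is an X_d*-frame for X_0*: there exist A, B > 0 with A‖f*‖ ≤ ‖{[f_j, f]}‖_{X_d*} ≤ B‖f*‖ for all f in X_0 (where f* is the dual element of f). Indeed, if C is the Bessel-type constant for the coefficient functionals, one may take A = 1/C. -/
open scoped ComplexConjugate
open Filter Topology

/-- Every family of local `X_d^*`-atoms for `X_0^*` is an `X_d^*`-frame for `X_0^*`,
with lower bound `1/C`. -/
theorem local_atoms_are_frame {X Xd : Type*}
    [NormedAddCommGroup X] [NormedSpace ℂ X] [CompleteSpace X]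
    [StrictConvexSpace ℝ X] [TopologicalSpace.SeparableSpace X]
    [NormedAddCommGroup Xd] [NormedSpace ℂ Xd] [CompleteSpace Xd]
    (S : CompatSIP X)
    (X0 : Submodule ℂ X) (hX0 : IsClosed (X0 : Set X))
    (fj : ℕ → X)
    (e : ℕ → Xd) (coord : ℕ → StrongDual ℂ Xd)
    (hco : ∀ i j, coord i (e j) = if i = j then (1 : ℂ) else 0)
    (hbasis : ∀ c : Xd, SumsTo (fun j => coord j c • e j) c)
    -- `{f_j}` is an `X_d^*`-Bessel sequence: `{[f_j, f]}` is represented by `F f ∈ X_d^*`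
    (F : X → StrongDual ℂ Xd)
    (hF : ∀ (f : X) (j : ℕ), F f (e j) = S.sip (fj j) f)
    (B : ℝ) (hB : 0 < B) (hBessel : ∀ f : X, ‖F f‖ ≤ B * ‖f‖)
    -- local atoms: coefficient functionals `μ_j(f) = coord j (m f)`
    (m : X0 → Xd) (C : ℝ) (hC : 0 < C)
    (hm : ∀ f : X0, ‖m f‖ ≤ C * ‖(f : X)‖)
    (hrec : ∀ f : X0, SumsTo (fun j => coord j (m f) • fj j) (f : X)) :
    ∀ f : X0, (1 / C) * ‖(f : X)‖ ≤ ‖F (f : X)‖ ∧ ‖F (f : X)‖ ≤ B * ‖(f : X)‖ := by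
  intro f
  refine ⟨?_, hBessel f⟩
  -- key identity : ‖f‖² = F f (m f)
  have h1 : Tendsto (fun n => S.dual (f : X) (∑ j ∈ Finset.range n, coord j (m f) • fj j))
      atTop (𝓝 (S.dual (f : X) (f : X))) :=
    ((S.dual (f : X)).continuous.tendsto _).comp (hrec f)
  have h2 : Tendsto (fun n => F (f : X) (∑ j ∈ Finset.range n, coord j (m f) • e j))
      atTop (𝓝 (F (f : X) (m f))) :=
    ((F (f : X)).continuous.tendsto _).comp (hbasis (m f))
  have heq : ∀ n, S.dual (f : X) (∑ j ∈ Finset.range n, coord j (m f) • fj j)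
      = F (f : X) (∑ j ∈ Finset.range n, coord j (m f) • e j) := by
    intro n
    rw [map_sum, map_sum]
    refine Finset.sum_congr rfl fun j _ => ?_
    rw [map_smul, map_smul]
    congr 1
    exact (hF (f : X) j).symm
  have hkey : ((‖(f : X)‖ : ℂ)) ^ 2 = F (f : X) (m f) := by
    have := tendsto_nhds_unique h1 (by simpa only [heq] using h2)
    rw [← this]
    exact (S.compat (f : X)).symm ▸ rfl
  have hnorm : ‖(f : X)‖ ^ 2 ≤ ‖F (f : X)‖ * (C * ‖(f : X)‖) := by
    have h3 : ‖F (f : X) (m f)‖ ≤ ‖F (f : X)‖ * ‖m f‖ := (F (f : X)).le_opNorm _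
    have h4 : ‖((‖(f : X)‖ : ℂ)) ^ 2‖ = ‖(f : X)‖ ^ 2 := by
      rw [norm_pow, Complex.norm_real, Real.norm_of_nonneg (norm_nonneg _)]
    calc ‖(f : X)‖ ^ 2 = ‖F (f : X) (m f)‖ := by rw [← h4, hkey]
      _ ≤ ‖F (f : X)‖ * ‖m f‖ := h3
      _ ≤ ‖F (f : X)‖ * (C * ‖(f : X)‖) := by
          exact mul_le_mul_of_nonneg_left (hm f) (norm_nonneg _)
  rcases eq_or_lt_of_le (norm_nonneg (f : X)) with h0 | h0
  · rw [← h0, mul_zero]; exact norm_nonneg _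
  · rw [div_mul_eq_mul_div, one_mul, div_le_iff₀ hC]
    have : ‖(f : X)‖ * ‖(f : X)‖ ≤ (‖F (f : X)‖ * C) * ‖(f : X)‖ := by
      calc ‖(f : X)‖ * ‖(f : X)‖ = ‖(f : X)‖ ^ 2 := (sq _).symm
        _ ≤ ‖F (f : X)‖ * (C * ‖(f : X)‖) := hnorm
        _ = (‖F (f : X)‖ * C) * ‖(f : X)‖ := by ring
    exact le_of_mul_le_mul_right this h0
end

section
/- Let X_d be a CB-space, X a separable strictly convex Banach space with compatible semi-inner product [·,·], and {f_j} ⊆ X. If Σ_j b_j f_j converges in X for every b = {b_j} ∈ X_d and ‖Σ_j b_j f_j‖_X ≤ B‖b‖_{X_d}, then {f_j} is an X_d*-Bessel sequence for X* with bound B: for all f ∈ X, {[f_j, f]} ∈ X_d* and ‖{[f_j, f]}‖_{X_d*} ≤ B‖f*‖_{X*}. -/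
open scoped ComplexConjugate
open Filter Topology

/-- If `Σ_j b_j f_j` converges for all `b ∈ X_d` with `‖Σ_j b_j f_j‖ ≤ B‖b‖`, then
`{f_j}` is an `X_d^*`-Bessel sequence for `X^*` with bound `B`. -/
theorem synthesis_bound_implies_Bessel {X Xd : Type*}
    [NormedAddCommGroup X] [NormedSpace ℂ X] [CompleteSpace X]
    [StrictConvexSpace ℝ X] [TopologicalSpace.SeparableSpace X]
    [NormedAddCommGroup Xd] [NormedSpace ℂ Xd] [CompleteSpace Xd]
    (S : CompatSIP X)
    (e : ℕ → Xd) (coord : ℕ → StrongDual ℂ Xd)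
    (hco : ∀ i j, coord i (e j) = if i = j then (1 : ℂ) else 0)
    (hbasis : ∀ c : Xd, SumsTo (fun j => coord j c • e j) c)
    (fj : ℕ → X) (B : ℝ) (hB : 0 < B)
    (U : Xd → X)
    (hU : ∀ b : Xd, SumsTo (fun j => coord j b • fj j) (U b))
    (hUb : ∀ b : Xd, ‖U b‖ ≤ B * ‖b‖) :
    ∀ f : X, ∃ F : StrongDual ℂ Xd,
      (∀ j, F (e j) = S.sip (fj j) f) ∧ ‖F‖ ≤ B * ‖f‖ := by
  have hadd : ∀ b c : Xd, U (b + c) = U b + U c := by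
    intro b c
    refine tendsto_nhds_unique (hU (b + c)) ?_
    have heq : (fun n => ∑ j ∈ Finset.range n, coord j (b + c) • fj j)
        = fun n => (∑ j ∈ Finset.range n, coord j b • fj j)
          + (∑ j ∈ Finset.range n, coord j c • fj j) := by
      funext n
      rw [← Finset.sum_add_distrib]
      refine Finset.sum_congr rfl fun j _ => ?_
      rw [map_add, add_smul]
    rw [heq]
    exact (hU b).add (hU c)
  have hsmul : ∀ (a : ℂ) (b : Xd), U (a • b) = a • U b := by
    intro a b
    refine tendsto_nhds_unique (hU (a • b)) ?_
    have heq : (fun n => ∑ j ∈ Finset.range n, coord j (a • b) • fj j)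
        = fun n => a • (∑ j ∈ Finset.range n, coord j b • fj j) := by
      funext n
      rw [Finset.smul_sum]
      refine Finset.sum_congr rfl fun j _ => ?_
      rw [map_smul, smul_smul]
      rfl
    rw [heq]
    exact (hU b).const_smul a
  let T : Xd →L[ℂ] X := LinearMap.mkContinuous
    { toFun := U, map_add' := hadd, map_smul' := hsmul } B (fun b => hUb b)
  have hUe : ∀ j, U (e j) = fj j := by
    intro j
    refine tendsto_nhds_unique (hU (e j)) ?_
    have heq : ∀ n, j < n → ∑ i ∈ Finset.range n, coord i (e j) • fj i = fj j := by
      intro n hn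
      have : ∀ i ∈ Finset.range n, coord i (e j) • fj i
          = if i = j then fj j else 0 := by
        intro i _
        rw [hco i j]
        split <;> simp_all
      rw [Finset.sum_congr rfl this, Finset.sum_ite_eq' (Finset.range n) j fun _ => fj j,
        if_pos (Finset.mem_range.2 hn)]
    refine Tendsto.congr' ?_ tendsto_const_nhds
    filter_upwards [eventually_gt_atTop j] with n hn
    exact (heq n hn).symm
  intro f
  refine ⟨(S.dual f).comp T, fun j => ?_, ?_⟩
  · show S.sip (U (e j)) f = S.sip (fj j) f
    rw [hUe j]
  · refine ContinuousLinearMap.opNorm_le_bound _ (mul_nonneg hB.le (norm_nonneg f)) fun b => ?_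
    calc ‖S.sip (U b) f‖ ≤ ‖U b‖ * ‖f‖ := S.cauchy_schwarz _ _
      _ ≤ (B * ‖b‖) * ‖f‖ := by
          exact mul_le_mul_of_nonneg_right (hUb b) (norm_nonneg f)
      _ = B * ‖f‖ * ‖b‖ := by ring
end

section
/- Let X be a strictly convex separable Banach space with compatible s.i.p., X_d a CB-space, K ∈ B(X), and {f_j} ⊆ X. If {f_j} is an X_d*-Bessel sequence for X* and there exists an X_d-Bessel sequence {g_j*} for X with K*f* = Σ_j [f_j, f] g_j* for all f* ∈ X*, then {f_j} is an X_d*-atomic system for X* with respect to K: Σ_j b_j f_j converges with ‖Σ_j b_j f_j‖ ≤ B‖b‖_{X_d} for all b ∈ X_d, and for every f ∈ X there exists a_f = {[f, g_j]} ∈ X_d with ‖a_f‖ ≤ C‖f‖ and Kf = Σ_j [f,g_j] f_j. -/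
open scoped ComplexConjugate
open Filter Topology

lemma CompatSIP.dual_apply' {X : Type*} [NormedAddCommGroup X] [NormedSpace ℂ X]
    (S : CompatSIP X) (f g : X) : S.dual f g = S.sip g f := rfl

/-- If `{f_j}` is an `X_d^*`-Bessel sequence and there is an `X_d`-Bessel sequence
`{g_j^*}` with `K^*f^* = Σ_j [f_j, f] g_j^*`, then `{f_j}` is an `X_d^*`-atomic
system for `X^*` with respect to `K`. -/
theorem Bessel_decomposition_implies_atomic_system {X Xd : Type*}
    [NormedAddCommGroup X] [NormedSpace ℂ X] [CompleteSpace X]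
    [StrictConvexSpace ℝ X] [TopologicalSpace.SeparableSpace X]
    [NormedAddCommGroup Xd] [NormedSpace ℂ Xd] [CompleteSpace Xd]
    (S : CompatSIP X)
    (e : ℕ → Xd) (coord : ℕ → StrongDual ℂ Xd)
    (hco : ∀ i j, coord i (e j) = if i = j then (1 : ℂ) else 0)
    (hbasis : ∀ c : Xd, SumsTo (fun j => coord j c • e j) c)
    (fj : ℕ → X) (K : X →L[ℂ] X)
    -- `{f_j}` is an `X_d^*`-Bessel sequence with bound `B`
    (F : X → StrongDual ℂ Xd)
    (hF : ∀ (f : X) (j : ℕ), F f (e j) = S.sip (fj j) f)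
    (B : ℝ) (hB : 0 < B) (hBessel : ∀ f : X, ‖F f‖ ≤ B * ‖f‖)
    -- `{g_j^*}` is an `X_d`-Bessel sequence with bound `C`
    (g : ℕ → X) (m : X → Xd) (C : ℝ) (hC : 0 < C)
    (hm : ∀ (x : X) (j : ℕ), coord j (m x) = S.sip x (g j))
    (hmC : ∀ x : X, ‖m x‖ ≤ C * ‖x‖)
    -- decomposition `K^*f^* = Σ_j [f_j, f] g_j^*`
    (hdec : ∀ f : X,
      SumsTo (fun j => S.sip (fj j) f • S.dual (g j)) (opDual K (S.dual f))) :
    (∃ B' : ℝ, 0 < B' ∧ ∀ b : Xd, ∃ s : X,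
        SumsTo (fun j => coord j b • fj j) s ∧ ‖s‖ ≤ B' * ‖b‖) ∧
    (∃ C' : ℝ, 0 < C' ∧ ∀ x : X, ∃ a : Xd,
        (∀ j, coord j a = S.sip x (g j)) ∧ ‖a‖ ≤ C' * ‖x‖ ∧
        SumsTo (fun j => coord j a • fj j) (K x)) := by

  classical
  -- key norm bound for finite sections
  have keybound : ∀ (b : Xd) (t : Finset ℕ),
      ‖∑ j ∈ t, coord j b • fj j‖ ≤ B * ‖∑ j ∈ t, coord j b • e j‖ := by
    intro b t
    set y := ∑ j ∈ t, coord j b • fj j with hy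
    by_cases h0 : y = 0
    · rw [h0]; simp; positivity
    · have hsip : S.sip y y = F y (∑ j ∈ t, coord j b • e j) := by
        have h1 : S.sip y y = ∑ j ∈ t, coord j b * S.sip (fj j) y := by
          calc S.sip y y = S.dual y (∑ j ∈ t, coord j b • fj j) := rfl
            _ = ∑ j ∈ t, coord j b * S.sip (fj j) y := by
                rw [map_sum]
                exact Finset.sum_congr rfl fun j _ => by
                  rw [map_smul]; simp [CompatSIP.dual_apply', smul_eq_mul]
        have h2 : F y (∑ j ∈ t, coord j b • e j)
            = ∑ j ∈ t, coord j b * S.sip (fj j) y := by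
          rw [map_sum]
          exact Finset.sum_congr rfl fun j _ => by
            rw [map_smul, smul_eq_mul, hF]
        rw [h1, h2]
      have hnsq : ‖y‖ ^ 2 ≤ (B * ‖∑ j ∈ t, coord j b • e j‖) * ‖y‖ := by
        have hc : ‖S.sip y y‖ = ‖y‖ ^ 2 := by
          rw [S.compat y, norm_pow, Complex.norm_real, norm_norm]
        calc ‖y‖ ^ 2 = ‖S.sip y y‖ := hc.symm
          _ = ‖F y (∑ j ∈ t, coord j b • e j)‖ := by rw [hsip]
          _ ≤ ‖F y‖ * ‖∑ j ∈ t, coord j b • e j‖ := (F y).le_opNorm _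
          _ ≤ (B * ‖y‖) * ‖∑ j ∈ t, coord j b • e j‖ := by
              apply mul_le_mul_of_nonneg_right (hBessel y) (norm_nonneg _)
          _ = (B * ‖∑ j ∈ t, coord j b • e j‖) * ‖y‖ := by ring
      have hypos : 0 < ‖y‖ := norm_pos_iff.mpr h0
      nlinarith [hnsq, hypos]
  have part1 : ∀ b : Xd, ∃ s : X,
      SumsTo (fun j => coord j b • fj j) s ∧ ‖s‖ ≤ B * ‖b‖ := by
    intro b
    set sfun := fun n => ∑ j ∈ Finset.range n, coord j b • fj j with hsfun
    set pfun := fun n => ∑ j ∈ Finset.range n, coord j b • e j with hpfun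
    have hp : Tendsto pfun atTop (𝓝 b) := hbasis b
    have hdiff : ∀ m n : ℕ, m ≤ n → ‖sfun n - sfun m‖ ≤ B * ‖pfun n - pfun m‖ := by
      intro m n hmn
      have h1 : sfun n - sfun m = ∑ j ∈ Finset.Ico m n, coord j b • fj j := by
        rw [hsfun]
        simp only
        rw [Finset.sum_Ico_eq_sub _ hmn]
      have h2 : pfun n - pfun m = ∑ j ∈ Finset.Ico m n, coord j b • e j := by
        rw [hpfun]
        simp only
        rw [Finset.sum_Ico_eq_sub _ hmn]
      rw [h1, h2]
      exact keybound b _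
    have hcauchy : CauchySeq sfun := by
      rw [Metric.cauchySeq_iff']
      intro ε hε
      have hpc : CauchySeq pfun := hp.cauchySeq
      rw [Metric.cauchySeq_iff'] at hpc
      obtain ⟨N, hN⟩ := hpc (ε / (B + 1)) (by positivity)
      refine ⟨N, fun n hn => ?_⟩
      have hd := hdiff N n hn
      have hpn : ‖pfun n - pfun N‖ < ε / (B + 1) := by
        have := hN n hn
        rwa [dist_eq_norm] at this
      rw [dist_eq_norm]
      calc ‖sfun n - sfun N‖ ≤ B * ‖pfun n - pfun N‖ := hd
        _ ≤ B * (ε / (B + 1)) := mul_le_mul_of_nonneg_left hpn.le hB.le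
        _ = (B / (B + 1)) * ε := by ring
        _ < 1 * ε := by
            apply mul_lt_mul_of_pos_right _ hε
            rw [div_lt_one (by linarith)]; linarith
        _ = ε := one_mul ε
    obtain ⟨s, hs⟩ := cauchySeq_tendsto_of_complete hcauchy
    refine ⟨s, hs, ?_⟩
    have hb1 : ∀ n, ‖sfun n‖ ≤ B * ‖pfun n‖ := fun n => by
      simpa using keybound b (Finset.range n)
    have hlim : Tendsto (fun n => B * ‖pfun n‖) atTop (𝓝 (B * ‖b‖)) :=
      (hp.norm).const_mul B
    exact le_of_tendsto_of_tendsto' hs.norm hlim hb1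
  refine ⟨⟨B, hB, part1⟩, ⟨C, hC, fun x => ?_⟩⟩
  obtain ⟨s, hs, -⟩ := part1 (m x)
  refine ⟨m x, hm x, hmC x, ?_⟩
  have key : s = K x := by
    have hd : ∀ f : X, S.sip s f = S.sip (K x) f := by
      intro f
      have h1 : Tendsto (fun n => S.dual f (∑ j ∈ Finset.range n, coord j (m x) • fj j))
          atTop (𝓝 (S.dual f s)) := ((S.dual f).continuous.tendsto s).comp hs
      have h3 : Tendsto (fun n =>
          (∑ j ∈ Finset.range n, S.sip (fj j) f • S.dual (g j)) x)
          atTop (𝓝 ((opDual K (S.dual f)) x)) :=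
        ((ContinuousLinearMap.apply ℂ ℂ x).continuous.tendsto _).comp (hdec f)
      have heq : ∀ n : ℕ, S.dual f (∑ j ∈ Finset.range n, coord j (m x) • fj j)
          = (∑ j ∈ Finset.range n, S.sip (fj j) f • S.dual (g j)) x := by
        intro n
        rw [map_sum, ContinuousLinearMap.sum_apply]
        exact Finset.sum_congr rfl fun j _ => by
          rw [map_smul, hm]
          simp only [ContinuousLinearMap.smul_apply, CompatSIP.dual_apply', smul_eq_mul]
          ring
      rw [funext heq] at h1
      have h4 := tendsto_nhds_unique h1 h3
      simpa [CompatSIP.dual_apply', opDual_apply] using h4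
    have hdz : S.sip (s - K x) (s - K x) = 0 := by
      calc S.sip (s - K x) (s - K x)
          = S.sip s (s - K x) - S.sip (K x) (s - K x) :=
            map_sub (S.dual (s - K x)) s (K x)
        _ = 0 := by rw [hd (s - K x)]; ring
    have hc := S.compat (s - K x)
    rw [hdz] at hc
    have hn0 : ‖s - K x‖ = 0 := by
      have : ((‖s - K x‖ : ℂ)) ^ 2 = 0 := hc.symm
      have h2 : (‖s - K x‖ : ℂ) = 0 := pow_eq_zero_iff (n := 2) (by norm_num) |>.mp this
      exact_mod_cast h2
    have : s - K x = 0 := norm_eq_zero.mp hn0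
    exact sub_eq_zero.mp this
  exact key ▸ hs
end

section
/- Every X_d*-atomic system {f_j} for X* with respect to K ∈ B(X) is an X_d*-K-frame for X*: if C is the constant in the atomic decomposition, then (1/C)‖K*f*‖ ≤ ‖{[f_j, f]}‖_{X_d*} ≤ B‖f*‖ for all f ∈ X. -/
open scoped ComplexConjugate
open Filter Topology

/-- Every `X_d^*`-atomic system for `X^*` with respect to `K` is an `X_d^*`-`K`-frame
with lower bound `1/C`. -/
theorem atomic_system_is_Kframe {X Xd : Type*}
    [NormedAddCommGroup X] [NormedSpace ℂ X] [CompleteSpace X]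
    [StrictConvexSpace ℝ X] [TopologicalSpace.SeparableSpace X]
    [NormedAddCommGroup Xd] [NormedSpace ℂ Xd] [CompleteSpace Xd]
    (S : CompatSIP X)
    (e : ℕ → Xd) (coord : ℕ → StrongDual ℂ Xd)
    (hco : ∀ i j, coord i (e j) = if i = j then (1 : ℂ) else 0)
    (hbasis : ∀ c : Xd, SumsTo (fun j => coord j c • e j) c)
    (fj : ℕ → X) (K : X →L[ℂ] X)
    (B : ℝ) (hB : 0 < B)
    (hconv : ∀ b : Xd, ∃ s : X,
      SumsTo (fun j => coord j b • fj j) s ∧ ‖s‖ ≤ B * ‖b‖)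
    (C : ℝ) (hC : 0 < C)
    (hatomic : ∀ x : X, ∃ a : Xd, ‖a‖ ≤ C * ‖x‖ ∧
      SumsTo (fun j => coord j a • fj j) (K x)) :
    ∀ f : X, ∃ F : StrongDual ℂ Xd,
      (∀ j, F (e j) = S.sip (fj j) f) ∧
      (1 / C) * ‖opDual K (S.dual f)‖ ≤ ‖F‖ ∧ ‖F‖ ≤ B * ‖f‖ := by
  intro f
  choose s hs hnorm using hconv
  have hadd : ∀ b c : Xd, s (b + c) = s b + s c := by
    intro b c
    refine tendsto_nhds_unique (hs (b + c)) ?_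
    have : (fun n => ∑ j ∈ Finset.range n, coord j (b + c) • fj j)
        = fun n => (∑ j ∈ Finset.range n, coord j b • fj j)
          + (∑ j ∈ Finset.range n, coord j c • fj j) := by
      funext n
      rw [← Finset.sum_add_distrib]
      exact Finset.sum_congr rfl fun j _ => by rw [map_add, add_smul]
    rw [this]
    exact (hs b).add (hs c)
  have hsmul : ∀ (a : ℂ) (b : Xd), s (a • b) = a • s b := by
    intro a b
    refine tendsto_nhds_unique (hs (a • b)) ?_
    have : (fun n => ∑ j ∈ Finset.range n, coord j (a • b) • fj j)
        = fun n => a • (∑ j ∈ Finset.range n, coord j b • fj j) := by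
      funext n
      rw [Finset.smul_sum]
      exact Finset.sum_congr rfl fun j _ => by rw [map_smul, smul_smul]; rfl
    rw [this]
    exact (hs b).const_smul a
  set T : Xd →L[ℂ] X := LinearMap.mkContinuous
    { toFun := s, map_add' := hadd, map_smul' := hsmul } B (fun b => hnorm b) with hT
  have hTapp : ∀ b, T b = s b := fun b => rfl
  have hTe : ∀ j, T (e j) = fj j := by
    intro j
    refine tendsto_nhds_unique (hs (e j)) ?_
    refine Tendsto.congr' ?_ (tendsto_const_nhds : Tendsto (fun _ : ℕ => fj j) atTop _)
    filter_upwards [Filter.eventually_ge_atTop (j + 1)] with n hn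
    have hjmem : j ∈ Finset.range n := Finset.mem_range.2 hn
    rw [Finset.sum_eq_single j]
    · rw [hco j j]; simp
    · intro i _ hij
      rw [hco i j, if_neg hij, zero_smul]
    · intro h; exact absurd hjmem h
  refine ⟨(S.dual f).comp T, fun j => by simp [hTe j]; rfl, ?_, ?_⟩
  · rw [one_div, inv_mul_le_iff₀ hC]
    refine ContinuousLinearMap.opNorm_le_bound _
      (mul_nonneg hC.le (norm_nonneg _)) fun x => ?_
    obtain ⟨a, ha, hKa⟩ := hatomic x
    have hKx : K x = s a := tendsto_nhds_unique hKa (hs a)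
    have : opDual K (S.dual f) x = ((S.dual f).comp T) a := by
      simp [opDual_apply, hKx, hTapp]
    rw [this]
    calc ‖((S.dual f).comp T) a‖ ≤ ‖(S.dual f).comp T‖ * ‖a‖ :=
          ContinuousLinearMap.le_opNorm _ _
      _ ≤ ‖(S.dual f).comp T‖ * (C * ‖x‖) :=
          mul_le_mul_of_nonneg_left ha (norm_nonneg _)
      _ = C * ‖(S.dual f).comp T‖ * ‖x‖ := by ring
  · calc ‖(S.dual f).comp T‖ ≤ ‖S.dual f‖ * ‖T‖ :=
          ContinuousLinearMap.opNorm_comp_le _ _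
      _ ≤ ‖f‖ * B := mul_le_mul (LinearMap.mkContinuous_norm_le _ (norm_nonneg f) _)
          (LinearMap.mkContinuous_norm_le _ hB.le _) (norm_nonneg _) (norm_nonneg _)
      _ = B * ‖f‖ := mul_comm _ _
end

section
/- Let {f_j} be an X_d*-K-frame for X* with bounds A, B, and let S = U Φ T be its X_d*-K-frame operator, where U is the synthesis operator, T the analysis operator, and Φ the (single-valued) duality mapping on X_d*. Then for all f ∈ X: A²‖K*f*‖² ≤ [Sf*, f] ≤ B²‖f*‖², and indeed [Sf*, f] = ‖{[f_j, f]}‖²_{X_d*}. -/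
open scoped ComplexConjugate
open Filter Topology

/-- For the `X_d^*`-`K`-frame operator `S = UΦT` one has
`[Sf^*, f] = ‖{[f_j,f]}‖²` and `A²‖K^*f^*‖² ≤ [Sf^*, f] ≤ B²‖f^*‖²`. -/
theorem frame_operator_bounds {X Xd : Type*}
    [NormedAddCommGroup X] [NormedSpace ℂ X] [CompleteSpace X]
    [StrictConvexSpace ℝ X] [TopologicalSpace.SeparableSpace X]
    [NormedAddCommGroup Xd] [NormedSpace ℂ Xd] [CompleteSpace Xd]
    [UniformConvexSpace Xd]
    (S : CompatSIP X)
    (e : ℕ → Xd) (coord : ℕ → StrongDual ℂ Xd)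
    (hco : ∀ i j, coord i (e j) = if i = j then (1 : ℂ) else 0)
    (hbasis : ∀ c : Xd, SumsTo (fun j => coord j c • e j) c)
    (fj : ℕ → X) (K : X →L[ℂ] X)
    -- analysis operator
    (T : StrongDual ℂ X →L[ℂ] StrongDual ℂ Xd)
    (hT : ∀ (f : X) (j : ℕ), T (S.dual f) (e j) = S.sip (fj j) f)
    -- synthesis operator
    (U : Xd →L[ℂ] X) (hU : ∀ j, U (e j) = fj j)
    -- duality mapping on `X_d^*` (values in `X_d ≅ X_d^{**}`)
    (Φ : StrongDual ℂ Xd → Xd)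
    (hΦ1 : ∀ F : StrongDual ℂ Xd, F (Φ F) = (‖F‖ : ℂ) ^ 2)
    (hΦ2 : ∀ F : StrongDual ℂ Xd, ‖Φ F‖ = ‖F‖)
    -- frame bounds
    (A B : ℝ) (hA : 0 < A) (hB : 0 < B)
    (hframe : ∀ f : X,
      A * ‖opDual K (S.dual f)‖ ≤ ‖T (S.dual f)‖ ∧ ‖T (S.dual f)‖ ≤ B * ‖f‖) :
    ∀ f : X,
      S.sip (U (Φ (T (S.dual f)))) f = (‖T (S.dual f)‖ : ℂ) ^ 2 ∧
      A ^ 2 * ‖opDual K (S.dual f)‖ ^ 2 ≤ ‖T (S.dual f)‖ ^ 2 ∧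
      ‖T (S.dual f)‖ ^ 2 ≤ B ^ 2 * ‖f‖ ^ 2 := by
  intro f
  set F := T (S.dual f) with hF
  have hag : ∀ c : Xd, F c = S.dual f (U c) := by
    intro c
    have h1 : Tendsto (fun n => F (∑ j ∈ Finset.range n, coord j c • e j)) atTop (𝓝 (F c)) :=
      (F.continuous.tendsto c).comp (hbasis c)
    have h2 : Tendsto (fun n => S.dual f (U (∑ j ∈ Finset.range n, coord j c • e j)))
        atTop (𝓝 (S.dual f (U c))) :=
      (((S.dual f).continuous.comp U.continuous).tendsto c).comp (hbasis c)
    have heq : ∀ n, F (∑ j ∈ Finset.range n, coord j c • e j)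
        = S.dual f (U (∑ j ∈ Finset.range n, coord j c • e j)) := by
      intro n
      simp only [map_sum, map_smul]
      refine Finset.sum_congr rfl fun j _ => ?_
      have : F (e j) = S.dual f (U (e j)) := by
        rw [hT f j, hU j]; rfl
      rw [this]
    exact tendsto_nhds_unique (by simpa only [heq] using h1) h2
  obtain ⟨hlo, hhi⟩ := hframe f
  refine ⟨?_, ?_, ?_⟩
  · have : S.sip (U (Φ F)) f = S.dual f (U (Φ F)) := rfl
    rw [this, ← hag (Φ F), hΦ1 F]
  · calc A ^ 2 * ‖opDual K (S.dual f)‖ ^ 2 = (A * ‖opDual K (S.dual f)‖) ^ 2 := by ring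
      _ ≤ ‖F‖ ^ 2 := by
        apply pow_le_pow_left₀ (by positivity) hlo
  · calc ‖F‖ ^ 2 ≤ (B * ‖f‖) ^ 2 := pow_le_pow_left₀ (norm_nonneg _) hhi 2
      _ = B ^ 2 * ‖f‖ ^ 2 := by ring
end

section
/- Let {f_j} be an X_d*-K-frame for X* with bounds A, B, and {g_j} ⊆ X a sequence such that for all finite sequences {c_j}: ‖Σ c_j(g_j − f_j)‖ ≤ α‖Σ c_j f_j‖ + β‖Σ c_j g_j‖ + γ‖{c_j}‖_{X_d}, where max{β, α + γA⁻¹‖K†‖‖Φ‖} < 1. Then Σ_j c_j g_j converges for every {c_j} ∈ X_d and {g_j} is an X_d*-Bessel sequence for X* with bound ((1+α)B + γ)/(1−β). -/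
open scoped ComplexConjugate
open Filter Topology

/-- Paley–Wiener-type perturbation of an `X_d^*`-`K`-frame: under the perturbation
condition, `Σ_j c_j g_j` converges for every `c ∈ X_d` and `{g_j}` is an
`X_d^*`-Bessel sequence with bound `((1+α)B + γ)/(1−β)`. -/
theorem perturbation_Bessel {X Xd : Type*}
    [NormedAddCommGroup X] [NormedSpace ℂ X] [CompleteSpace X]
    [StrictConvexSpace ℝ X] [TopologicalSpace.SeparableSpace X]
    [NormedAddCommGroup Xd] [NormedSpace ℂ Xd] [CompleteSpace Xd]
    [UniformConvexSpace Xd]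
    (S : CompatSIP X)
    (e : ℕ → Xd) (coord : ℕ → StrongDual ℂ Xd)
    (hco : ∀ i j, coord i (e j) = if i = j then (1 : ℂ) else 0)
    (hbasis : ∀ c : Xd, SumsTo (fun j => coord j c • e j) c)
    (fj gj : ℕ → X) (K : X →L[ℂ] X)
    -- pseudo-inverse of `K` and duality mapping on `X_d^*` with its bound
    (Kd : X →L[ℂ] X) (hKd : ∀ g ∈ Set.range K, K (Kd g) = g)
    (Φ : StrongDual ℂ Xd → Xd) (CΦ : ℝ) (hCΦ : 0 < CΦ)
    (hΦ : ∀ F : StrongDual ℂ Xd, ‖Φ F‖ ≤ CΦ * ‖F‖)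
    -- synthesis operator of `{f_j}`
    (U : Xd →L[ℂ] X) (hU : ∀ j, U (e j) = fj j)
    -- `{f_j}` is an `X_d^*`-`K`-frame with bounds `A, B`
    (A B : ℝ) (hA : 0 < A) (hB : 0 < B) (hUnorm : ‖U‖ ≤ B)
    (hframe : ∀ f : X, ∃ F : StrongDual ℂ Xd,
      (∀ j, F (e j) = S.sip (fj j) f) ∧
      A * ‖opDual K (S.dual f)‖ ≤ ‖F‖ ∧ ‖F‖ ≤ B * ‖f‖)
    -- perturbation condition on finite sequences
    (α β γ : ℝ) (hα : 0 ≤ α) (hβ : 0 ≤ β) (hγ : 0 ≤ γ)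
    (hpert : ∀ (s : Finset ℕ) (c : ℕ → ℂ),
      ‖∑ j ∈ s, c j • (gj j - fj j)‖ ≤
        α * ‖∑ j ∈ s, c j • fj j‖ + β * ‖∑ j ∈ s, c j • gj j‖ +
          γ * ‖∑ j ∈ s, c j • e j‖)
    (hβ1 : β < 1) (hsmall : α + γ * A⁻¹ * ‖Kd‖ * CΦ < 1) :
    (∀ c : Xd, ∃ s : X, SumsTo (fun j => coord j c • gj j) s) ∧
    (∀ f : X, ∃ G : StrongDual ℂ Xd,
      (∀ j, G (e j) = S.sip (gj j) f) ∧
      ‖G‖ ≤ (((1 + α) * B + γ) / (1 - β)) * ‖f‖) := by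
  set D : ℝ := ((1 + α) * B + γ) / (1 - β) with hD
  have h1β : (0:ℝ) < 1 - β := by linarith
  have hDnn : 0 ≤ D := div_nonneg (by nlinarith) h1β.le
  -- key inequality on finite sums
  have key : ∀ (s : Finset ℕ) (c : ℕ → ℂ),
      ‖∑ j ∈ s, c j • gj j‖ ≤ D * ‖∑ j ∈ s, c j • e j‖ := by
    intro s c
    have hF : (∑ j ∈ s, c j • fj j) = U (∑ j ∈ s, c j • e j) := by
      rw [map_sum]
      exact Finset.sum_congr rfl fun j _ => by rw [map_smul, hU]
    have hFnorm : ‖∑ j ∈ s, c j • fj j‖ ≤ B * ‖∑ j ∈ s, c j • e j‖ := by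
      rw [hF]
      calc ‖U (∑ j ∈ s, c j • e j)‖ ≤ ‖U‖ * ‖∑ j ∈ s, c j • e j‖ := U.le_opNorm _
        _ ≤ B * ‖∑ j ∈ s, c j • e j‖ :=
          mul_le_mul_of_nonneg_right hUnorm (norm_nonneg _)
    have hdiff : (∑ j ∈ s, c j • gj j) - (∑ j ∈ s, c j • fj j)
        = ∑ j ∈ s, c j • (gj j - fj j) := by
      rw [← Finset.sum_sub_distrib]
      exact Finset.sum_congr rfl fun j _ => (smul_sub _ _ _).symm
    have h2 := hpert s c
    have h3 : ‖∑ j ∈ s, c j • gj j‖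
        ≤ ‖∑ j ∈ s, c j • fj j‖ + ‖∑ j ∈ s, c j • (gj j - fj j)‖ := by
      rw [← hdiff]
      calc ‖∑ j ∈ s, c j • gj j‖
          = ‖(∑ j ∈ s, c j • fj j) + ((∑ j ∈ s, c j • gj j) - (∑ j ∈ s, c j • fj j))‖ := by
            congr 1; abel
        _ ≤ _ := norm_add_le _ _
    rw [hD, div_mul_eq_mul_div, le_div_iff₀ h1β]
    have hEn : 0 ≤ ‖∑ j ∈ s, c j • e j‖ := norm_nonneg _
    nlinarith [norm_nonneg (∑ j ∈ s, c j • gj j)]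
  -- distance comparison between partial sums
  have hdist0 : ∀ (c : Xd) (m n : ℕ), m ≤ n →
      dist (∑ j ∈ Finset.range m, coord j c • gj j) (∑ j ∈ Finset.range n, coord j c • gj j)
      ≤ D * dist (∑ j ∈ Finset.range m, coord j c • e j)
            (∑ j ∈ Finset.range n, coord j c • e j) := by
    intro c m n hmn
    rw [dist_eq_norm', dist_eq_norm',
      ← Finset.sum_Ico_eq_sub (fun j => coord j c • gj j) hmn,
      ← Finset.sum_Ico_eq_sub (fun j => coord j c • e j) hmn]
    exact key _ _
  have hdist : ∀ (c : Xd) (m n : ℕ),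
      dist (∑ j ∈ Finset.range m, coord j c • gj j) (∑ j ∈ Finset.range n, coord j c • gj j)
      ≤ D * dist (∑ j ∈ Finset.range m, coord j c • e j)
            (∑ j ∈ Finset.range n, coord j c • e j) := by
    intro c m n
    rcases le_total m n with h | h
    · exact hdist0 c m n h
    · rw [dist_comm, dist_comm (∑ j ∈ Finset.range m, coord j c • e j)]
      exact hdist0 c n m h
  -- convergence
  have conv : ∀ c : Xd, ∃ s : X, SumsTo (fun j => coord j c • gj j) s := by
    intro c
    have hE : CauchySeq (fun n => ∑ j ∈ Finset.range n, coord j c • e j) :=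
      (hbasis c).cauchySeq
    have hG : CauchySeq (fun n => ∑ j ∈ Finset.range n, coord j c • gj j) := by
      rw [Metric.cauchySeq_iff] at hE ⊢
      intro ε hε
      obtain ⟨N, hN⟩ := hE (ε / (D + 1)) (by positivity)
      refine ⟨N, fun m hm n hn => ?_⟩
      have h1 : dist (∑ j ∈ Finset.range m, coord j c • gj j)
          (∑ j ∈ Finset.range n, coord j c • gj j) ≤ D * (ε / (D + 1)) :=
        le_trans (hdist c m n)
          (mul_le_mul_of_nonneg_left (hN m hm n hn).le hDnn)
      have h2 : D * (ε / (D + 1)) < ε := by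
        rw [mul_div_assoc']
        rw [div_lt_iff₀ (by positivity : (0:ℝ) < D + 1)]
        nlinarith
      exact lt_of_le_of_lt h1 h2
    obtain ⟨s, hs⟩ := cauchySeq_tendsto_of_complete hG
    exact ⟨s, hs⟩
  refine ⟨conv, ?_⟩
  -- build the synthesis-type operator for {g_j}
  have hT : ∀ c : Xd, SumsTo (fun j => coord j c • gj j) ((conv c).choose) :=
    fun c => (conv c).choose_spec
  have hadd : ∀ c c' : Xd, (conv (c + c')).choose = (conv c).choose + (conv c').choose := by
    intro c c'
    refine tendsto_nhds_unique (hT (c + c')) ?_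
    have := ((hT c).add (hT c'))
    refine this.congr fun n => ?_
    simp only [map_add, add_smul, Finset.sum_add_distrib]
  have hsmul : ∀ (a : ℂ) (c : Xd), (conv (a • c)).choose = a • (conv c).choose := by
    intro a c
    refine tendsto_nhds_unique (hT (a • c)) ?_
    have := (hT c).const_smul a
    refine this.congr fun n => ?_
    simp only [map_smul, smul_eq_mul, mul_smul, Finset.smul_sum]
  have hbound : ∀ c : Xd, ‖(conv c).choose‖ ≤ D * ‖c‖ := by
    intro c
    refine le_of_tendsto_of_tendsto' (hT c).norm ((hbasis c).norm.const_mul D) ?_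
    exact fun n => key (Finset.range n) (fun j => coord j c)
  set T : Xd →L[ℂ] X := LinearMap.mkContinuous
    { toFun := fun c => (conv c).choose
      map_add' := hadd
      map_smul' := hsmul } D hbound with hTdef
  have hTnorm : ‖T‖ ≤ D := LinearMap.mkContinuous_norm_le _ hDnn _
  have hTe : ∀ j, T (e j) = gj j := by
    intro j
    refine tendsto_nhds_unique (hT (e j)) ?_
    refine Tendsto.congr' ?_ (tendsto_const_nhds : Tendsto (fun _ : ℕ => gj j) atTop _)
    filter_upwards [Filter.eventually_atTop.mpr ⟨j + 1, fun n hn => hn⟩] with n hn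
    simp only [hco, ite_smul, one_smul, zero_smul]
    rw [Finset.sum_ite_eq' (Finset.range n) j gj, if_pos (Finset.mem_range.mpr hn)]
  intro f
  refine ⟨(S.dual f).comp T, fun j => ?_, ?_⟩
  · show S.sip (T (e j)) f = S.sip (gj j) f
    rw [hTe j]
  · have hdual : ‖S.dual f‖ ≤ ‖f‖ := LinearMap.mkContinuous_norm_le _ (norm_nonneg f) _
    calc ‖(S.dual f).comp T‖ ≤ ‖S.dual f‖ * ‖T‖ := ContinuousLinearMap.opNorm_comp_le _ _
      _ ≤ ‖f‖ * D := mul_le_mul hdual hTnorm (norm_nonneg _) (norm_nonneg _)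
      _ = D * ‖f‖ := mul_comm _ _
end
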